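/- For n ≥ 4 agents {a,b,c,d,i₁,…,i_{n−4}}, the call sequence (a,i₁),…,(a,i_{n−4}), (a,b), (c,d), (a,d), (b,c), (a,i₁),…,(a,i_{n−4}) of length 2n − 4 applied to root makes every agent an expert. -/

import Mathlib

/-- A call is an ordered pair of distinct agents (caller, callee). -/
def Call (n : ℕ) : Type := {p : Fin n × Fin n // p.1 ≠ p.2}

namespace Gossip

variable {n : ℕ}

/-- The caller of a call. -/
def caller (c : Call n) : Fin n := c.1.1

/-- The callee of a call. -/
def callee (c : Call n) : Fin n := c.1.2

/-- Agent `a` is involved in call `c`. -/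
def involves (c : Call n) (a : Fin n) : Prop := a = caller c ∨ a = callee c

/-- A gossip situation assigns to each agent the set of secrets it is familiar with;
secrets are identified with the agents holding them. -/
def Situation (n : ℕ) := Fin n → Finset (Fin n)

/-- The initial gossip situation: every agent only holds its own secret. -/
def root : Situation n := fun a => {a}

/-- The effect of a call on a gossip situation: caller and callee share their secrets. -/
def applyCall (c : Call n) (s : Situation n) : Situation n :=
  fun x => if x = caller c ∨ x = callee c then s (caller c) ∪ s (callee c) else s x

/-- The effect of a call sequence on a gossip situation. -/
def applySeq (σ : List (Call n)) (s : Situation n) : Situation n :=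
  σ.foldl (fun t c => applyCall c t) s

end Gossip

open Gossip

/-- Among `n ≥ 4` agents we name `a, b, c, d` the agents with indices `0, 1, 2, 3`
and `i₁, …, i_{n−4}` the agents with indices `4, …, n − 1`. -/
def agent {n : ℕ} (hn : 4 ≤ n) (k : ℕ) (hk : k < 4) : Fin n := ⟨k, by omega⟩

/-- A call between two named agents. -/
def mkCall {n : ℕ} (hn : 4 ≤ n) (k l : ℕ) (hk : k < 4) (hl : l < 4) (hkl : k ≠ l) :
    Call n :=
  ⟨(agent hn k hk, agent hn l hl), by apply Fin.ne_of_val_ne; simpa [agent] using hkl⟩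

/-- The calls `(a, i₁), …, (a, i_{n−4})`: agent `a` calls each of the remaining agents. -/
def sideCalls {n : ℕ} (hn : 4 ≤ n) : List (Call n) :=
  (List.finRange (n - 4)).map (fun j =>
    ⟨(agent hn 0 (by omega), ⟨j.1 + 4, by have := j.isLt; omega⟩), by
      apply Fin.ne_of_val_ne; simp [agent]⟩)

/-- The middle calls `(a,b), (c,d), (a,d), (b,c)`. -/
def midCalls {n : ℕ} (hn : 4 ≤ n) : List (Call n) :=
  [mkCall hn 0 1 (by omega) (by omega) (by omega),
   mkCall hn 2 3 (by omega) (by omega) (by omega),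
   mkCall hn 0 3 (by omega) (by omega) (by omega),
   mkCall hn 1 2 (by omega) (by omega) (by omega)]

namespace Gossip

lemma subset_applyCall {n : ℕ} (c : Call n) (s : Situation n) (x : Fin n) :
    s x ⊆ applyCall c s x := by
  unfold applyCall
  by_cases h : x = caller c ∨ x = callee c
  · simp only [if_pos h]
    rcases h with h | h <;> subst h
    · exact Finset.subset_union_left
    · exact Finset.subset_union_right
  · simp only [if_neg h]
    exact subset_rfl

lemma subset_applySeq {n : ℕ} (σ : List (Call n)) (s : Situation n) (x : Fin n) :
    s x ⊆ applySeq σ s x := by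
  induction σ generalizing s with
  | nil => exact subset_rfl
  | cons c σ ih =>
      exact (subset_applyCall c s x).trans (ih (applyCall c s))

lemma applySeq_append {n : ℕ} (σ τ : List (Call n)) (s : Situation n) :
    applySeq (σ ++ τ) s = applySeq τ (applySeq σ s) := by
  simp [applySeq, List.foldl_append]

end Gossip

lemma mem_sideCalls {n : ℕ} (hn : 4 ≤ n) (j : Fin n) (hj : 4 ≤ j.val) :
    (⟨(agent hn 0 (by omega), j), by
        apply Fin.ne_of_val_ne; simp only [agent]; omega⟩ : Call n) ∈ sideCalls hn := by
  simp only [sideCalls]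
  refine List.mem_map.mpr ⟨⟨j.val - 4, by have := j.isLt; omega⟩, List.mem_finRange _, ?_⟩
  apply Subtype.ext
  dsimp
  congr 1
  apply Fin.ext
  simp
  omega

lemma side_key {n : ℕ} (hn : 4 ≤ n) (s : Situation n) (j : Fin n) (hj : 4 ≤ j.val) :
    (s (agent hn 0 (by omega)) ∪ s j ⊆ applySeq (sideCalls hn) s (agent hn 0 (by omega))) ∧
    (s (agent hn 0 (by omega)) ∪ s j ⊆ applySeq (sideCalls hn) s j) := by
  set c : Call n := ⟨(agent hn 0 (by omega), j), by
        apply Fin.ne_of_val_ne; simp only [agent]; omega⟩ with hc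
  obtain ⟨l₁, l₂, hsplit⟩ : ∃ l₁ l₂ : List (Call n), sideCalls hn = l₁ ++ c :: l₂ :=
    List.append_of_mem (mem_sideCalls hn j hj)
  have hcc : caller c = agent hn 0 (by omega) := rfl
  have hce : callee c = j := rfl
  rw [hsplit]
  have h1 : applySeq (l₁ ++ c :: l₂) s = applySeq l₂ (applyCall c (applySeq l₁ s)) := by
    rw [show l₁ ++ c :: l₂ = (l₁ ++ [c]) ++ l₂ by simp, applySeq_append, applySeq_append]
    rfl
  rw [h1]
  set u := applySeq l₁ s with hu
  have h0 : s (agent hn 0 (by omega)) ∪ s j ⊆ u (agent hn 0 (by omega)) ∪ u j :=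
    Finset.union_subset_union (subset_applySeq _ _ _) (subset_applySeq _ _ _)
  have hca : applyCall c u (agent hn 0 (by omega)) = u (agent hn 0 (by omega)) ∪ u j := by
    simp [applyCall, hcc, hce]
  have hcj : applyCall c u j = u (agent hn 0 (by omega)) ∪ u j := by
    simp [applyCall, hcc, hce]
  constructor
  · refine h0.trans ?_
    rw [← hca]
    exact subset_applySeq l₂ _ _
  · refine h0.trans ?_
    rw [← hcj]
    exact subset_applySeq l₂ _ _

lemma mid_key {n : ℕ} (hn : 4 ≤ n) (s : Situation n) (k : ℕ) (hk : k < 4) :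
    ((s (agent hn 0 (by omega)) ∪ s (agent hn 1 (by omega))) ∪
       (s (agent hn 2 (by omega)) ∪ s (agent hn 3 (by omega)))) ⊆
      applySeq (midCalls hn) s (agent hn k hk) := by
  interval_cases k <;>
    simp [midCalls, applySeq, applyCall, mkCall, agent, caller, callee, Fin.ext_iff,
      Finset.union_subset_iff, Call]

/-- the call sequence
`(a,i₁),…,(a,i_{n−4}), (a,b), (c,d), (a,d), (b,c), (a,i₁),…,(a,i_{n−4})`
has length `2n − 4` and applied to `root` makes every agent an expert. -/
theorem two_n_minus_four_calls_suffice {n : ℕ} (hn : 4 ≤ n) :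
    (sideCalls hn ++ midCalls hn ++ sideCalls hn).length = 2 * n - 4 ∧
    ∀ e : Fin n,
      applySeq (sideCalls hn ++ midCalls hn ++ sideCalls hn) root e = Finset.univ := by
  have ha0 : ∀ h, agent hn 0 h = (⟨0, by omega⟩ : Fin n) := fun _ => rfl
  constructor
  · rw [List.length_append, List.length_append,
      show (sideCalls hn).length = n - 4 from (List.length_map _).trans (List.length_finRange)]
    simp [sideCalls, midCalls]
    omega
  · intro e
    rw [applySeq_append, applySeq_append]
    set s1 := applySeq (sideCalls hn) root with hs1
    set s2 := applySeq (midCalls hn) s1 with hs2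
    -- every agent keeps its own secret in s1
    have hself : ∀ x : Fin n, x ∈ s1 x := fun x =>
      subset_applySeq (sideCalls hn) root x (by simp [root])
    -- agent 0 collects all high secrets in s1
    have hhigh : ∀ j : Fin n, 4 ≤ j.val → j ∈ s1 (agent hn 0 (by omega)) := by
      intro j hj
      exact (side_key hn root j hj).1 (by simp [root])
    -- after midCalls, all low agents are experts
    have hmid : ∀ k (hk : k < 4), s2 (agent hn k hk) = Finset.univ := by
      intro k hk
      apply Finset.eq_univ_of_forall
      intro x
      apply mid_key hn s1 k hk
      by_cases hx : 4 ≤ x.val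
      · exact Finset.mem_union_left _ (Finset.mem_union_left _ (hhigh x hx))
      · push_neg at hx
        interval_cases h : x.val
        · have : x = agent hn 0 (by omega) := Fin.ext (by simpa [agent] using h)
          exact Finset.mem_union_left _ (Finset.mem_union_left _ (this ▸ hself x))
        · have : x = agent hn 1 (by omega) := Fin.ext (by simpa [agent] using h)
          exact Finset.mem_union_left _ (Finset.mem_union_right _ (this ▸ hself x))
        · have : x = agent hn 2 (by omega) := Fin.ext (by simpa [agent] using h)
          exact Finset.mem_union_right _ (Finset.mem_union_left _ (this ▸ hself x))
        · have : x = agent hn 3 (by omega) := Fin.ext (by simpa [agent] using h)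
          exact Finset.mem_union_right _ (Finset.mem_union_right _ (this ▸ hself x))
    -- final sideCalls
    apply Finset.univ_subset_iff.mp
    by_cases he : 4 ≤ e.val
    · calc Finset.univ = s2 (agent hn 0 (by omega)) := (hmid 0 (by omega)).symm
        _ ⊆ s2 (agent hn 0 (by omega)) ∪ s2 e := Finset.subset_union_left
        _ ⊆ applySeq (sideCalls hn) s2 e := (side_key hn s2 e he).2
    · push_neg at he
      have : e = agent hn e.val he := Fin.ext (by simp [agent])
      calc Finset.univ = s2 e := by rw [this]; exact (hmid e.val he).symm
        _ ⊆ applySeq (sideCalls hn) s2 e := subset_applySeq _ _ _
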